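/- arXiv:2105.11719 — 2 statements merged into one kernel-verified Lean document; each statement's English description precedes it below -/
import Mathlib

section
/- Let N ≥ 2 and let l ≥ 2 be an integer with l² ∣ N. Then the constant 2l-tuple (N/l mod N, …, N/l mod N), which is a solution of (E_N), is an irreducible solution of (E_N) if and only if l = 2. -/
open Matrix

/-- `Mmat [a₁, …, aₙ]` is the product `[[aₙ,-1],[1,0]] ⋯ [[a₁,-1],[1,0]]`. -/
def Mmat {R : Type*} [CommRing R] : List R → Matrix (Fin 2) (Fin 2) R
  | [] => 1
  | a :: t => Mmat t * !![a, -1; 1, 0]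

/-- A tuple is a solution of (E_N) if its matrix is `Id` or `-Id`. -/
def IsSolution {R : Type*} [CommRing R] (l : List R) : Prop :=
  Mmat l = 1 ∨ Mmat l = -1

/-- The sum `(a₁,…,aₙ) ⊕ (b₁,…,bₘ) = (a₁+bₘ, a₂,…,aₙ₋₁, aₙ+b₁, b₂,…,bₘ₋₁)`. -/
def oplus {R : Type*} [CommRing R] (a b : List R) : List R :=
  List.ofFn (fun i : Fin (a.length + b.length - 2) =>
    if (i : ℕ) = 0 then a.getD 0 0 + b.getD (b.length - 1) 0
    else if (i : ℕ) < a.length - 1 then a.getD (i : ℕ) 0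
    else if (i : ℕ) = a.length - 1 then a.getD (a.length - 1) 0 + b.getD 0 0
    else b.getD ((i : ℕ) - a.length + 1) 0)

/-- Two tuples are equivalent if one is a cyclic permutation of the other or of
its reversal. -/
def TupleEquiv {R : Type*} (a b : List R) : Prop :=
  (∃ k, b = a.rotate k) ∨ (∃ k, b = a.reverse.rotate k)

/-- A solution `c` (of size ≥ 3) is reducible if `c ∼ a ⊕ b` with `b` a solution,
`a` of size ≥ 3 and `b` of size ≥ 3. -/
def Reducible {R : Type*} [CommRing R] (c : List R) : Prop :=
  ∃ a b : List R, 3 ≤ a.length ∧ 3 ≤ b.length ∧ IsSolution b ∧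
    TupleEquiv c (oplus a b)

/-- The alternating tuple `(k, -k, k, -k, …)` of length `n`. -/
def altList {R : Type*} [CommRing R] (n : ℕ) (k : R) : List R :=
  List.ofFn (fun i : Fin n => if (i : ℕ) % 2 = 0 then k else -k)

/-- Continuants: `K₋₁ = 0`, `K₀ = 1`,
`Kₙ(x₁,…,xₙ) = x₁·Kₙ₋₁(x₂,…,xₙ) - Kₙ₋₂(x₃,…,xₙ)`. -/
def contK {R : Type*} [CommRing R] : List R → R
  | [] => 1
  | [x] => x
  | x :: y :: t => x * contK (y :: t) - contK t

lemma Mmat_nil {R : Type*} [CommRing R] : (Mmat ([] : List R)) = 1 := rfl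
lemma Mmat_cons {R : Type*} [CommRing R] (a : R) (t : List R) :
    Mmat (a :: t) = Mmat t * !![a, -1; 1, 0] := rfl

lemma Mmat_append {R : Type*} [CommRing R] (s t : List R) :
    Mmat (s ++ t) = Mmat t * Mmat s := by
  induction s with
  | nil => simp [Mmat_nil]
  | cons a s ih => rw [List.cons_append, Mmat_cons, Mmat_cons, ih, mul_assoc]

lemma Mmat_replicate {R : Type*} [CommRing R] (a : R) (n : ℕ) :
    Mmat (List.replicate n a) = (!![a, -1; 1, 0]) ^ n := by
  induction n with
  | zero => simp [Mmat_nil]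
  | succ n ih => rw [List.replicate_succ, Mmat_cons, ih, pow_succ]

lemma pow_even_sq_zero {R : Type*} [CommRing R] (a : R) (ha : a * a = 0) (j : ℕ) :
    (!![a, -1; 1, 0] : Matrix (Fin 2) (Fin 2) R) ^ (2 * j)
      = (-1 : R) ^ j • !![1, (j : R) * a; -((j : R) * a), 1] := by
  induction j with
  | zero => simp [Matrix.one_fin_two]
  | succ j ih =>
    have ha2 : a ^ 2 = 0 := by rw [pow_two]; exact ha
    have ha3 : a ^ 3 = 0 := by rw [pow_succ, ha2, zero_mul]
    rw [show 2 * (j + 1) = 2 * j + 2 by ring, pow_add, ih, pow_two]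
    ext i k
    fin_cases i <;> fin_cases k <;>
      simp [Matrix.mul_apply, Fin.sum_univ_succ, pow_succ] <;> push_cast <;> ring_nf <;>
      simp [ha2, ha3] <;> ring

lemma key2 {R : Type*} [CommRing R] (t : R) (ht : t * t = 0) :
    !![-t, -1; 1, 0] * ((!![1, t; -t, 1] : Matrix (Fin 2) (Fin 2) R) * !![-t, -1; 1, 0]) = -1 := by
  ext i k
  fin_cases i <;> fin_cases k <;>
    simp [Matrix.mul_apply, Fin.sum_univ_succ] <;> ring_nf <;>
    simp [show t ^ 2 = 0 by rw [pow_two]; exact ht]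

lemma getD_mid {R : Type*} [CommRing R] (u a : R) (m s : ℕ) (hs : s < m) :
    (u :: (List.replicate m a ++ [u])).getD (s + 1) 0 = a := by
  rw [List.getD_cons_succ, List.getD_append _ _ _ _ (by simpa using hs),
    List.getD_eq_getElem _ _ (by simpa using hs), List.getElem_replicate]

lemma getD_last {R : Type*} [CommRing R] (u a : R) (m : ℕ) :
    (u :: (List.replicate m a ++ [u])).getD (m + 1) 0 = u := by
  rw [List.getD_cons_succ, List.getD_append_right _ _ _ _ (by simp)]
  simp

theorem replicate_div_sq_irreducible_iff (N l : ℕ) (hN : 2 ≤ N) (hl : 2 ≤ l)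
    (hdvd : l ^ 2 ∣ N) :
    IsSolution (List.replicate (2 * l) ((N / l : ℕ) : ZMod N)) ∧
    (¬ Reducible (List.replicate (2 * l) ((N / l : ℕ) : ZMod N)) ↔ l = 2) := by
  have hl0 : 0 < l := by omega
  have hlN : l ∣ N := dvd_trans (dvd_pow_self l two_ne_zero) hdvd
  set a : ZMod N := ((N / l : ℕ) : ZMod N) with ha_def
  obtain ⟨k, hk⟩ := hdvd
  have hNl : N / l = l * k := by
    rw [hk, pow_two, mul_assoc]; exact Nat.mul_div_cancel_left _ hl0
  have ha : a * a = 0 := by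
    rw [ha_def, ← Nat.cast_mul, show N / l * (N / l) = N * k by rw [hNl, hk]; ring,
      Nat.cast_mul, ZMod.natCast_self, zero_mul]
  have hla : (l : ZMod N) * a = 0 := by
    rw [ha_def, ← Nat.cast_mul, Nat.mul_div_cancel' hlN, ZMod.natCast_self]
  have hpow : Mmat (List.replicate (2 * l) a) = (-1 : ZMod N) ^ l • 1 := by
    rw [Mmat_replicate, pow_even_sq_zero a ha l, hla, neg_zero, ← Matrix.one_fin_two]
  have hsol : IsSolution (List.replicate (2 * l) a) := by
    rcases Nat.even_or_odd l with he | ho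
    · left; rw [hpow, he.neg_one_pow, one_smul]
    · right; rw [hpow, ho.neg_one_pow, neg_smul, one_smul]
  refine ⟨hsol, ?_, ?_⟩
  · -- ¬ Reducible → l = 2
    intro hirr
    by_contra hne
    apply hirr
    have hl3 : 3 ≤ l := by omega
    obtain ⟨j, rfl⟩ : ∃ j, l = j + 2 := ⟨l - 2, by omega⟩
    have hj1 : 1 ≤ j := by omega
    push_cast at hla
    set u : ZMod N := -((j : ZMod N) * a) with hu
    set b : List (ZMod N) := u :: (List.replicate (2 * j) a ++ [u]) with hb
    have hbl : b.length = 2 * j + 2 := by simp [hb]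
    refine ⟨[-a, a, a, -a], b, by simp, by omega, ?_, ?_⟩
    · -- IsSolution b
      have hmm : Mmat b = (-1 : ZMod N) ^ j • (-1) := by
        have ht : ((j : ZMod N) * a) * ((j : ZMod N) * a) = 0 := by
          linear_combination ((j : ZMod N) * (j : ZMod N)) * ha
        rw [hb, Mmat_cons, Mmat_append, Mmat_cons, Mmat_nil, one_mul, Mmat_replicate,
          pow_even_sq_zero a ha j, mul_smul_comm, smul_mul_assoc, mul_assoc, hu,
          key2 _ ht]
      rcases Nat.even_or_odd j with he | ho
      · right; rw [hmm, he.neg_one_pow, one_smul]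
      · left; rw [hmm, ho.neg_one_pow, neg_smul, one_smul, neg_neg]
    · -- TupleEquiv
      left
      refine ⟨0, ?_⟩
      rw [List.rotate_zero]
      rw [List.eq_replicate_iff]
      constructor
      · simp [oplus, hb]; omega
      · intro v hv
        rw [oplus] at hv
        obtain ⟨i, hi⟩ := List.mem_ofFn.1 hv
        have hil : (i : ℕ) < 2 * j + 4 := by
          have := i.isLt
          simp [hbl] at this
          omega
        rw [← hi]
        by_cases h0 : (i : ℕ) = 0
        · rw [if_pos h0]
          have : b.getD (b.length - 1) 0 = u := by
            rw [hb, show (u :: (List.replicate (2 * j) a ++ [u])).length - 1 = 2 * j + 1 by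
              simp]
            exact getD_last u a (2 * j)
          rw [this]
          simp only [List.getD_cons_zero, hu]
          linear_combination -hla
        · rw [if_neg h0]
          by_cases h1 : (i : ℕ) < ([-a, a, a, -a] : List (ZMod N)).length - 1
          · rw [if_pos h1]
            simp only [List.length_cons, List.length_nil] at h1
            have h1' : (i : ℕ) = 1 ∨ (i : ℕ) = 2 := by omega
            rcases h1' with h | h <;> rw [h] <;>
              simp [List.getD_cons_succ, List.getD_cons_zero]
          · rw [if_neg h1]
            by_cases h2 : (i : ℕ) = ([-a, a, a, -a] : List (ZMod N)).length - 1
            · rw [if_pos h2]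
              rw [hb, List.getD_cons_zero]
              simp only [List.length_cons, List.length_nil]
              norm_num
              simp only [List.getD_cons_succ, List.getD_cons_zero, hu]
              linear_combination -hla
            · rw [if_neg h2]
              simp only [List.length_cons, List.length_nil] at h1 h2
              have h4 : 4 ≤ (i : ℕ) := by omega
              have hidx : (i : ℕ) - (([-a, a, a, -a] : List (ZMod N)).length) + 1
                  = ((i : ℕ) - 4) + 1 := by simp
              rw [hidx]
              exact getD_mid u a (2 * j) _ (by omega)
  · -- l = 2 → ¬ Reducible
    rintro rfl ⟨x, b, hx3, hb3, hbsol, hequiv⟩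
    have hN4 : 4 ≤ N := Nat.le_of_dvd (by omega) ⟨k, by rw [hk]; ring⟩
    have hd : oplus x b = List.replicate (2 * 2) a := by
      rcases hequiv with ⟨m, hm⟩ | ⟨m, hm⟩
      · rw [hm, List.rotate_replicate]
      · rw [hm, List.reverse_replicate, List.rotate_replicate]
    have hlen : x.length + b.length - 2 = 4 := by
      have := congrArg List.length hd
      simpa [oplus] using this
    have hx : x.length = 3 := by omega
    have hbl : b.length = 3 := by omega
    obtain ⟨x0, x1, x2, rfl⟩ := List.length_eq_three.1 hx
    obtain ⟨b0, b1, b2, rfl⟩ := List.length_eq_three.1 hbl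
    have hcomp : oplus [x0, x1, x2] [b0, b1, b2] = [x0 + b2, x1, x2 + b0, b1] := by
      rfl
    rw [hcomp] at hd
    have hb1 : b1 = a := by
      have := congrArg (fun t => t.getD 3 0) hd
      simpa using this
    subst hb1
    have hent : (Mmat [b0, a, b2]) 1 0 = a * b0 - 1 := by
      simp [Mmat_cons, Mmat_nil, Matrix.mul_apply, Fin.sum_univ_succ]
      ring
    have hab : a * b0 = 1 := by
      rcases hbsol with h | h <;> rw [h] at hent <;>
        simp [Matrix.one_apply] at hent <;> linear_combination -hent
    have h2 : (2 : ZMod N) = 0 := by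
      have h2a : (2 : ZMod N) * a = 0 := by
        have := hla; push_cast at this; exact this
      linear_combination (-2 : ZMod N) * hab + b0 * h2a
    haveI : NeZero N := ⟨by omega⟩
    have hdd : N ∣ 2 := (ZMod.natCast_eq_zero_iff 2 N).1 (by push_cast; exact h2)
    exact absurd (Nat.le_of_dvd (by norm_num) hdd) (by omega)
end

section
/- Let N be a prime number with N ≥ 5 such that N ≢ 1 (mod 12) and N ≢ −1 (mod 12). Let n be the least even positive integer such that the alternating n-tuple (2, −2, 2, −2, …, 2, −2) of elements of ℤ/Nℤ is a solution of (E_N). Then this alternating n-tuple (2, −2, …, 2, −2) is an irreducible solution of (E_N). -/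
open Matrix

def useq {R : Type*} [CommRing R] : ℕ → R
  | 0 => 0
  | 1 => 1
  | (n+2) => -6 * useq (n+1) - useq n

lemma useq_zero {R : Type*} [CommRing R] : (useq 0 : R) = 0 := rfl
lemma useq_one {R : Type*} [CommRing R] : (useq 1 : R) = 1 := rfl
lemma useq_rec {R : Type*} [CommRing R] (n : ℕ) :
    (useq (n+2) : R) = -6 * useq (n+1) - useq n := rfl

lemma useq_norm {R : Type*} [CommRing R] (m : ℕ) :
    (useq (m+1) : R)^2 + 6 * useq (m+1) * useq m + (useq m)^2 = 1 := by
  induction m with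
  | zero => simp [useq_zero, useq_one]
  | succ m ih =>
    rw [useq_rec]
    linear_combination ih

lemma mmat_append {R : Type*} [CommRing R] (l₁ l₂ : List R) :
    Mmat (l₁ ++ l₂) = Mmat l₂ * Mmat l₁ := by
  induction l₁ with
  | nil => simp [Mmat]
  | cons a t ih => simp [Mmat, ih, mul_assoc]

lemma altList_succ_succ {R : Type*} [CommRing R] (n : ℕ) (k : R) :
    altList (n+2) k = k :: -k :: altList n k := by
  unfold altList
  rw [List.ofFn_succ, List.ofFn_succ]
  simp only [Fin.val_zero, Fin.val_succ]
  norm_num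
  funext i
  have : (↑i + 1 + 1) % 2 = (i:ℕ) % 2 := by omega
  simp [this]

lemma altList_zero {R : Type*} [CommRing R] (k : R) : altList 0 k = [] := by
  simp [altList]

lemma altList_one {R : Type*} [CommRing R] (k : R) : altList 1 k = [k] := by
  simp [altList, List.ofFn_succ]

lemma altList_length {R : Type*} [CommRing R] (n : ℕ) (k : R) :
    (altList n k).length = n := by simp [altList]

lemma mmat_alt_even {R : Type*} [CommRing R] (k : R) :
    ∀ m : ℕ, Mmat (altList (2*m) k) = (!![-k, -1; 1, 0] * !![k, -1; 1, 0])^m := by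
  intro m
  induction m with
  | zero => simp [altList_zero, Mmat]
  | succ m ih =>
    have : 2*(m+1) = 2*m + 2 := by ring
    rw [this, altList_succ_succ]
    show Mmat (-k :: altList (2*m) k) * _ = _
    show (Mmat (altList (2*m) k) * _) * _ = _
    rw [ih, pow_succ, mul_assoc]

lemma mmat_alt_odd {R : Type*} [CommRing R] (k : R) :
    ∀ m : ℕ, Mmat (altList (2*m+1) k) =
      !![k, -1; 1, 0] * (!![-k, -1; 1, 0] * !![k, -1; 1, 0])^m := by
  intro m
  induction m with
  | zero => simp [altList_one, Mmat]
  | succ m ih =>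
    have : 2*(m+1)+1 = (2*m+1) + 2 := by ring
    rw [this, altList_succ_succ]
    show Mmat (-k :: altList (2*m+1) k) * _ = _
    show (Mmat (altList (2*m+1) k) * _) * _ = _
    rw [ih, pow_succ]
    simp only [mul_assoc]

lemma Ce_eq {R : Type*} [CommRing R] (e : R) (he : e*e = 4) :
    !![-e, -1; 1, 0] * !![e, -1; 1, 0] = !![-5, e; e, -1] := by
  ext i j
  fin_cases i <;> fin_cases j <;>
    simp [Matrix.mul_apply, Fin.sum_univ_two] <;> linear_combination -he

lemma Ce_pow {R : Type*} [CommRing R] (e : R) (he : e*e = 4) :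
    ∀ m : ℕ, (!![-5, e; e, -1] : Matrix (Fin 2) (Fin 2) R)^(m+1)
      = (useq (m+1) : R) • !![-5, e; e, -1] - (useq m : R) • 1 := by
  intro m
  induction m with
  | zero => simp [useq_zero, useq_one]
  | succ m ih =>
    rw [pow_succ, ih, useq_rec]
    ext i j
    fin_cases i <;> fin_cases j <;>
      simp [Matrix.mul_apply, Fin.sum_univ_two, Matrix.one_apply]
    all_goals first
      | ring1
      | linear_combination (useq (m+1) : R) * he

lemma getD_eq_getElem' {α : Type*} (l : List α) (d : α) (i : ℕ) (h : i < l.length) :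
    l.getD i d = l[i] := by
  rw [List.getD_eq_getElem?_getD, List.getElem?_eq_getElem h]; rfl

lemma altList_ext {R : Type*} [CommRing R] {l : List R} {n : ℕ} {k : R}
    (hlen : l.length = n)
    (h : ∀ i (hi : i < l.length), l[i] = if i % 2 = 0 then k else -k) :
    l = altList n k := by
  apply List.ext_getElem (by rw [altList_length, hlen])
  intro i h1 h2
  rw [h i h1]
  simp [altList]

lemma altList_rotate {R : Type*} [CommRing R] (n : ℕ) (hn : Even n) (k : R) (r : ℕ) :
    (altList n k).rotate r = altList n k ∨ (altList n k).rotate r = altList n (-k) := by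
  obtain ⟨s, hs⟩ := hn
  have hlen : ((altList n k).rotate r).length = n := by
    rw [List.length_rotate, altList_length]
  have key : ∀ i (hi : i < ((altList n k).rotate r).length),
      ((altList n k).rotate r)[i] = if (i + r) % 2 = 0 then k else -k := by
    intro i hi
    rw [List.getElem_rotate]
    simp only [altList, List.getElem_ofFn, List.length_ofFn]
    rw [Nat.mod_mod_of_dvd _ (show (2:ℕ) ∣ n by omega)]
  rcases Nat.even_or_odd r with hr | hr
  · left
    apply altList_ext hlen
    intro i hi
    rw [key i hi]
    obtain ⟨t, ht⟩ := hr
    have : (i + r) % 2 = i % 2 := by omega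
    rw [this]
  · right
    apply altList_ext hlen
    intro i hi
    rw [key i hi]
    obtain ⟨t, ht⟩ := hr
    rcases Nat.even_or_odd i with hi2 | hi2
    · obtain ⟨w, hw⟩ := hi2
      rw [if_neg (by omega), if_pos (by omega)]
    · obtain ⟨w, hw⟩ := hi2
      rw [if_pos (by omega), if_neg (by omega), neg_neg]

lemma altList_reverse {R : Type*} [CommRing R] (n : ℕ) (hn : Even n) (k : R) :
    (altList n k).reverse = altList n (-k) := by
  obtain ⟨s, hs⟩ := hn
  apply altList_ext (by simp [altList_length])
  intro i hi
  have hi' : i < n := by simpa [altList_length] using hi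
  rw [List.getElem_reverse]
  simp only [altList, List.getElem_ofFn, List.length_ofFn]
  rcases Nat.even_or_odd i with hi2 | hi2
  · obtain ⟨w, hw⟩ := hi2
    rw [if_neg (by omega), if_pos (by omega)]
  · obtain ⟨w, hw⟩ := hi2
    rw [if_pos (by omega), if_neg (by omega), neg_neg]

lemma mmat_single {R : Type*} [CommRing R] (z : R) : Mmat [z] = !![z,-1;1,0] := by
  show (1 : Matrix (Fin 2) (Fin 2) R) * _ = _
  rw [one_mul]

lemma entry11 {R : Type*} [CommRing R] (x z : R) (L : List R) :
    Mmat (x :: (L ++ [z])) 1 1 = -(Mmat L 0 0) := by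
  show (Mmat (L ++ [z]) * !![x,-1;1,0]) 1 1 = _
  rw [mmat_append, mmat_single]
  simp [Matrix.mul_apply, Fin.sum_univ_two, Matrix.vecMul, dotProduct]

lemma not_isSquare_three (N : ℕ) (hp : N.Prime) (hN : 5 ≤ N)
    (h1 : N % 12 ≠ 1) (h11 : N % 12 ≠ 11) : ¬ IsSquare (3 : ZMod N) := by
  haveI : Fact N.Prime := ⟨hp⟩
  have hodd : N % 2 = 1 := Nat.odd_iff.mp (hp.odd_of_ne_two (by omega))
  have h3 : N % 3 ≠ 0 := by
    intro h
    have h3d : (3:ℕ) ∣ N := Nat.dvd_of_mod_eq_zero h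
    have := (Nat.prime_dvd_prime_iff_eq (by norm_num) hp).mp h3d
    omega
  have h12 : N % 12 = 5 ∨ N % 12 = 7 := by omega
  have hcast : ((3:ℕ) : ZMod N) = (3 : ZMod N) := by norm_cast
  intro hsq
  rcases h12 with h | h
  · have h4 : N % 4 = 1 := by omega
    have hiff := ZMod.exists_sq_eq_prime_iff_of_mod_four_eq_one (p := N) (q := 3) h4 (by norm_num)
    rw [hcast] at hiff
    have hsq3 : IsSquare ((N:ℕ) : ZMod 3) := hiff.mp hsq
    have hN3 : ((N:ℕ) : ZMod 3) = 2 := by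
      have : ((N % 3 : ℕ) : ZMod 3) = ((N:ℕ) : ZMod 3) := ZMod.natCast_mod N 3
      rw [← this, show N % 3 = 2 by omega]
      norm_cast
    rw [hN3] at hsq3
    revert hsq3
    decide
  · have h4 : N % 4 = 3 := by omega
    have hiff := ZMod.exists_sq_eq_prime_iff_of_mod_four_eq_three (p := N) (q := 3) h4
      (by norm_num) (by omega)
    rw [hcast] at hiff
    have hsq3 : ¬ IsSquare ((N:ℕ) : ZMod 3) := hiff.mp hsq
    apply hsq3
    have hN3 : ((N:ℕ) : ZMod 3) = 1 := by
      have : ((N % 3 : ℕ) : ZMod 3) = ((N:ℕ) : ZMod 3) := ZMod.natCast_mod N 3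
      rw [← this, show N % 3 = 1 by omega]
      norm_cast
    rw [hN3]
    exact IsSquare.one

lemma key_lemma (N : ℕ) (hp : N.Prime) (hN : 5 ≤ N) (h1 : N % 12 ≠ 1) (h11 : N % 12 ≠ 11)
    (n : ℕ) (hn : IsLeast {m : ℕ | 0 < m ∧ Even m ∧ IsSolution (altList m (2 : ZMod N))} n)
    (j : ℕ) (hj1 : 1 ≤ j) (hj2 : j + 3 ≤ n) (e : ZMod N) (he : e = 2 ∨ e = -2)
    (hP : Mmat (altList j e) 0 0 = 1 ∨ Mmat (altList j e) 0 0 = -1) : False := by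
  haveI : Fact N.Prime := ⟨hp⟩
  have hcast : ∀ k : ℕ, 0 < k → k < N → ((k:ℕ) : ZMod N) ≠ 0 := by
    intro k hk1 hk2 h
    rw [ZMod.natCast_eq_zero_iff] at h
    have := Nat.le_of_dvd hk1 h
    omega
  have h1Z : (1 : ZMod N) ≠ 0 := one_ne_zero
  have h2Z : (2 : ZMod N) ≠ 0 := by
    have := hcast 2 (by norm_num) (by omega); simpa using this
  have h3Z : (3 : ZMod N) ≠ 0 := by
    have := hcast 3 (by norm_num) (by omega); simpa using this
  have h4Z : (4 : ZMod N) ≠ 0 := by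
    intro h
    apply h2Z
    have h4 : (2 : ZMod N) * 2 = 0 := by linear_combination h
    rcases mul_eq_zero.mp h4 with h' | h' <;> exact h'
  have hee : e * e = 4 := by rcases he with h | h <;> rw [h] <;> ring
  -- minimality tool
  have hmin : ∀ q : ℕ, (useq (q+1) : ZMod N) = 0 →
      ((useq q : ZMod N) = 1 ∨ (useq q : ZMod N) = -1) → n ≤ 2*(q+1) := by
    intro q h0 hpm
    apply hn.2
    refine ⟨by omega, ⟨q+1, by ring⟩, ?_⟩
    have h22 : (2:ZMod N) * 2 = 4 := by ring
    have hm2 := mmat_alt_even (2 : ZMod N) (q+1)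
    rw [Ce_eq _ h22, Ce_pow _ h22 q, h0] at hm2
    rcases hpm with h | h
    · right
      rw [hm2, h]
      simp
    · left
      rw [hm2, h]
      simp
  rcases Nat.even_or_odd j with hje | hjo
  · -- even case
    obtain ⟨m, hm⟩ := hje
    obtain ⟨m', rfl⟩ : ∃ m', m = m' + 1 := ⟨m - 1, by omega⟩
    rw [show j = 2*(m'+1) by omega] at hP
    have hPP := mmat_alt_even e (m'+1)
    rw [Ce_eq e hee, Ce_pow e hee m'] at hPP
    have hent : Mmat (altList (2*(m'+1)) e) 0 0
        = -5 * useq (m'+1) - useq m' := by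
      rw [hPP]
      simp [Matrix.sub_apply, Matrix.smul_apply, Matrix.one_apply]
      ring
    rw [hent] at hP
    set u : ZMod N := useq (m'+1) with hu
    set v : ZMod N := useq m' with hv
    have hnorm : u^2 + 6*u*v + v^2 = 1 := useq_norm m'
    have main : ∀ δ : ZMod N, (δ = 1 ∨ δ = -1) → -5*u - v = δ → False := by
      intro δ hδpm hδ
      have hδ2 : δ * δ = 1 := by rcases hδpm with h | h <;> rw [h] <;> ring
      have hvv : v = -5*u - δ := by linear_combination -hδ
      have hfac : u * (u - δ) = 0 := by
        have hn2 := hnorm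
        rw [hvv] at hn2
        have hfac4 : (4:ZMod N) * (u * (u - δ)) = 0 := by
          linear_combination -hn2 + hδ2
        rcases mul_eq_zero.mp hfac4 with h | h
        · exact absurd h h4Z
        · exact h
      rcases mul_eq_zero.mp hfac with hu0 | huδ
      · have hv2 : v * v = 1 := by linear_combination hnorm - (u + 6*v) * hu0
        have := hmin m' hu0 (mul_self_eq_one_iff.mp hv2)
        omega
      · have huδ' : u = δ := sub_eq_zero.mp huδ
        have h0 : (useq (m'+2) : ZMod N) = 0 := by
          rw [useq_rec]
          linear_combination -huδ' - hvv
        have hpm : (useq (m'+1) : ZMod N) = 1 ∨ (useq (m'+1) : ZMod N) = -1 := by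
          rcases hδpm with h | h
          · exact Or.inl (by rw [← h]; exact huδ')
          · exact Or.inr (by rw [← h]; exact huδ')
        have := hmin (m'+1) h0 hpm
        omega
    rcases hP with h | h
    · exact main 1 (Or.inl rfl) h
    · exact main (-1) (Or.inr rfl) h
  · -- odd case
    obtain ⟨m, hm⟩ := hjo
    rcases Nat.eq_zero_or_pos m with hm0 | hmpos
    · rw [show j = 1 by omega, altList_one, mmat_single] at hP
      simp at hP
      rcases he with he2 | he2 <;> rcases hP with h | h
      · exact h1Z (by linear_combination h - he2)
      · exact h3Z (by linear_combination h - he2)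
      · exact h3Z (by linear_combination he2 - h)
      · exact h1Z (by linear_combination he2 - h)
    · obtain ⟨m'', rfl⟩ : ∃ m'', m = m'' + 1 := ⟨m - 1, by omega⟩
      have hPP := mmat_alt_odd e (m''+1)
      rw [Ce_eq e hee, Ce_pow e hee m''] at hPP
      have hent : Mmat (altList (2*(m''+1)+1) e) 0 0
          = -6*e*useq (m''+1) - e*useq m'' := by
        rw [hPP]
        simp [Matrix.mul_apply, Fin.sum_univ_two, Matrix.sub_apply,
          Matrix.smul_apply, Matrix.one_apply]
        ring
      rw [hm, hent] at hP
      set u : ZMod N := useq (m''+1) with hu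
      set v : ZMod N := useq m'' with hv
      have hnorm : u^2 + 6*u*v + v^2 = 1 := useq_norm m''
      have main2 : ∀ δ : ZMod N, (δ = 1 ∨ δ = -1) → -6*e*u - e*v = δ → False := by
        intro δ hδpm hδ
        have hδ2 : δ * δ = 1 := by rcases hδpm with h | h <;> rw [h] <;> ring
        have hs : e*(6*u + v) = -δ := by linear_combination -hδ
        have hs4 : (4:ZMod N)*((6*u+v)*(6*u+v)) = 1 := by
          linear_combination (e*(6*u+v) - δ) * hs - ((6*u+v)*(6*u+v)) * hee + hδ2
        have h3sq : (u - 3*(6*u+v)) * (u - 3*(6*u+v)) = 3 := by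
          linear_combination hnorm + 2*hs4
        exact not_isSquare_three N hp hN h1 h11 ⟨_, h3sq.symm⟩
      rcases hP with h | h
      · exact main2 1 (Or.inl rfl) h
      · exact main2 (-1) (Or.inr rfl) h

theorem two_dynomial_minimal_irreducible (N : ℕ) (hp : N.Prime) (hN : 5 ≤ N)
    (h1 : N % 12 ≠ 1) (h11 : N % 12 ≠ 11)
    (n : ℕ)
    (hn : IsLeast {m : ℕ | 0 < m ∧ Even m ∧ IsSolution (altList m (2 : ZMod N))} n) :
    IsSolution (altList n (2 : ZMod N)) ∧ ¬ Reducible (altList n (2 : ZMod N)) := by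
  haveI : Fact N.Prime := ⟨hp⟩
  obtain ⟨⟨hnpos, hneven, hnsol⟩, hnmin⟩ := hn
  refine ⟨hnsol, ?_⟩
  rintro ⟨a, b, ha3, hb3, hbsol, hequiv⟩
  have hd : ∃ e₀ : ZMod N, (e₀ = (2:ZMod N) ∨ e₀ = -2) ∧ oplus a b = altList n e₀ := by
    rcases hequiv with ⟨r, hr⟩ | ⟨r, hr⟩
    · rcases altList_rotate n hneven (2:ZMod N) r with h | h
      · exact ⟨2, Or.inl rfl, by rw [hr, h]⟩
      · exact ⟨-2, Or.inr rfl, by rw [hr, h]⟩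
    · rw [altList_reverse n hneven] at hr
      rcases altList_rotate n hneven (-2:ZMod N) r with h | h
      · exact ⟨-2, Or.inr rfl, by rw [hr, h]⟩
      · exact ⟨2, Or.inl rfl, by rw [hr, h, neg_neg]⟩
  obtain ⟨e₀, he₀, hd⟩ := hd
  have hlen : a.length + b.length - 2 = n := by
    have := congrArg List.length hd
    simpa [oplus, altList_length] using this
  have hbent : ∀ t, t < b.length - 2 →
      b.getD (t+1) 0 = if (a.length + t) % 2 = 0 then e₀ else -e₀ := by
    intro t ht
    have hidx : a.length + t < (oplus a b).length := by
      simp only [oplus, List.length_ofFn]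
      omega
    have h2 := List.getElem_of_eq hd hidx
    simp only [oplus, altList, List.getElem_ofFn] at h2
    rw [if_neg (by omega), if_neg (by omega), if_neg (by omega)] at h2
    rw [show a.length + t - a.length + 1 = t + 1 by omega] at h2
    rw [h2]
  have hb0 : b ≠ [] := by
    intro h
    rw [h] at hb3
    simp at hb3
  have ht0 : b.tail ≠ [] := by
    have : b.tail.length = b.length - 1 := by simp
    intro h
    rw [h] at this
    simp at this
    omega
  set mid := b.tail.dropLast with hmid
  set e' : ZMod N := if a.length % 2 = 0 then e₀ else -e₀ with he'
  have hmidlen : mid.length = b.length - 2 := by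
    simp [hmid]
    omega
  have hmideq : mid = altList (b.length - 2) e' := by
    apply altList_ext hmidlen
    intro i hi
    have hi' : i < b.length - 2 := by rw [hmidlen] at hi; exact hi
    have hblen : i + 1 < b.length := by omega
    have h2 : mid[i] = b[i+1]'hblen := by
      simp [hmid]
    rw [h2, ← getD_eq_getElem' b 0 (i+1) hblen, hbent i hi']
    rcases Nat.even_or_odd a.length with ⟨w, hw⟩ | ⟨w, hw⟩ <;>
      rcases Nat.even_or_odd i with ⟨y, hy⟩ | ⟨y, hy⟩
    · rw [if_pos (by omega), if_pos (by omega), he', if_pos (by omega)]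
    · rw [if_neg (by omega), if_neg (by omega), he', if_pos (by omega)]
    · rw [if_neg (by omega), if_pos (by omega), he', if_neg (by omega)]
    · rw [if_pos (by omega), if_neg (by omega), he', if_neg (by omega), neg_neg]
  have hbdec : b = b.head hb0 :: (mid ++ [b.tail.getLast ht0]) := by
    rw [hmid, List.dropLast_append_getLast ht0, List.cons_head_tail]
  have hP : Mmat (altList (b.length - 2) e') 0 0 = 1 ∨
      Mmat (altList (b.length - 2) e') 0 0 = -1 := by
    rw [← hmideq]
    rcases hbsol with h | h
    · right
      rw [hbdec] at h
      have h2 := congrFun (congrFun h 1) 1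
      rw [entry11] at h2
      simp only [Matrix.one_apply_eq] at h2
      linear_combination -h2
    · left
      rw [hbdec] at h
      have h2 := congrFun (congrFun h 1) 1
      rw [entry11] at h2
      simp only [Matrix.neg_apply, Matrix.one_apply_eq] at h2
      linear_combination -h2
  have he'2 : e' = (2 : ZMod N) ∨ e' = -2 := by
    rw [he']
    rcases he₀ with h | h <;> rw [h] <;> split_ifs <;> simp
  exact key_lemma N hp hN h1 h11 n ⟨⟨hnpos, hneven, hnsol⟩, hnmin⟩
    (b.length - 2) (by omega) (by omega) e' he'2 hP
end
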